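/- Let P = P(d) be the natural unit interval order on {1,…,n} of a Dyck path d with bounce number 3, and let 0 ≤ l ≤ min{a,b,c}. Then there exists an injective map f from the set of P-tableaux of shape 3^{l+1} 1^{n-3l-3} into the set of P-tableaux of shape 3^l 2^1 1^{n-3l-2}, such that inv(f(T)) = inv(T) for every T in the domain. -/
import Mathlib


open scoped Classical

/-- A Dyck path on an `n × n` board: a weakly increasing sequence
`d 1 ≤ d 2 ≤ ⋯ ≤ d (n-1) ≤ n` with `i ≤ d i`; we record it on indices `1, …, n`
with the harmless boundary convention `d n = n`. -/
structure DyckPath (n : ℕ) where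
  d : ℕ → ℕ
  mono : ∀ i j : ℕ, 1 ≤ i → i ≤ j → j ≤ n → d i ≤ d j
  le_n : ∀ i : ℕ, 1 ≤ i → i ≤ n → d i ≤ n
  ge_self : ∀ i : ℕ, 1 ≤ i → i ≤ n → i ≤ d i
  top : d n = n

/-- The shape `3^l 2^j 1^m`, as a list of row lengths. -/
def shape (l j m : ℕ) : List ℕ :=
  List.replicate l 3 ++ List.replicate j 2 ++ List.replicate m 1

/-- Position in the row-by-row reading word where row `i` (0-indexed) starts. -/
def rowStart (μ : List ℕ) (i : ℕ) : ℕ := (μ.take i).sum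

/-- The entry in row `i`, column `j` (both 0-indexed) of the tableau of shape `μ`
whose row-by-row reading word is `L`. -/
def entry (μ L : List ℕ) (i j : ℕ) : ℕ := L.getD (rowStart μ i + j) 0

/-- The cells (row, column), 0-indexed, of the Young diagram with row lengths `μ`. -/
def cellsOf (μ : List ℕ) : Finset (ℕ × ℕ) :=
  (Finset.range μ.length ×ˢ Finset.range (μ.foldr max 0)).filter fun c =>
    c.2 < μ.getD c.1 0

namespace DyckPath

variable {n : ℕ}

/-- The natural unit interval order `P(d)`: `i ≺ j ↔ i < n ∧ j > d i`. -/
def prec (D : DyckPath n) (i j : ℕ) : Prop := i < n ∧ D.d i < j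

/-- Incomparability in `P(d)`. -/
def Incomp (D : DyckPath n) (x y : ℕ) : Prop := ¬ D.prec x y ∧ ¬ D.prec y x

/-- The bounce sequence `m 0 = d 1`, `m (k+1) = d (m k + 1)`. -/
def bounce (D : DyckPath n) : ℕ → ℕ
  | 0 => D.d 1
  | k + 1 => D.d (D.bounce k + 1)

def m0 (D : DyckPath n) : ℕ := D.bounce 0

def m1 (D : DyckPath n) : ℕ := D.bounce 1

/-- `d` has bounce number three: `m 2 = n` is the first bounce term equal to `n`. -/
def BounceThree (D : DyckPath n) : Prop := D.m0 < n ∧ D.m1 < n ∧ D.bounce 2 = n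

/-- `L` is the row-by-row reading word of a `P`-tableau of shape `μ`:
`L` uses each of `1, …, n` exactly once, rows strictly increase in `≺`, and for
vertically adjacent cells the lower entry is not `≺` the upper one. -/
def IsPTab (D : DyckPath n) (μ L : List ℕ) : Prop :=
  L.Perm (List.map (· + 1) (List.range n)) ∧ μ.sum = n ∧
  (∀ i j : ℕ, i < μ.length → j + 1 < μ.getD i 0 →
    D.prec (entry μ L i j) (entry μ L i (j + 1))) ∧
  (∀ i j : ℕ, i + 1 < μ.length → j < μ.getD (i + 1) 0 →
    ¬ D.prec (entry μ L (i + 1) j) (entry μ L i j))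

/-- The number of inversions of a `P`-tableau: pairs of entries `x > y`,
incomparable in `P`, with `x` in a strictly higher row than `y`. -/
noncomputable def invNum (D : DyckPath n) (μ L : List ℕ) : ℕ :=
  ((cellsOf μ ×ˢ cellsOf μ).filter fun pq =>
    pq.1.1 < pq.2.1 ∧ entry μ L pq.2.1 pq.2.2 < entry μ L pq.1.1 pq.1.2 ∧
      D.Incomp (entry μ L pq.1.1 pq.1.2) (entry μ L pq.2.1 pq.2.2)).card

/-- The finite set of (reading words of) `P`-tableaux of shape `μ`. -/
noncomputable def ptabs (D : DyckPath n) (μ : List ℕ) : Finset (List ℕ) :=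
  ((List.map (· + 1) (List.range n)).permutations.toFinset).filter fun L => D.IsPTab μ L

/-- `B_μ(q) = Σ_T q^{inv T}` over all `P`-tableaux `T` of shape `μ`, as a polynomial in `ℤ[q]`. -/
noncomputable def B (D : DyckPath n) (μ : List ℕ) : Polynomial ℤ :=
  ∑ L ∈ D.ptabs μ, Polynomial.X ^ D.invNum μ L

end DyckPath


section Stmt7Aux

open List

lemma s7_getD_replicate (k x i : ℕ) : (List.replicate k x).getD i 0 = if i < k then x else 0 := by
  rw [List.getD_eq_getElem?_getD, List.getElem?_replicate]
  split <;> rfl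

lemma s7_shape_length (a b c : ℕ) : (shape a b c).length = a + b + c := by
  simp only [shape, List.length_append, List.length_replicate]

lemma s7_shape_sum (a b c : ℕ) : (shape a b c).sum = 3 * a + 2 * b + c := by
  simp only [shape, List.sum_append, List.sum_replicate, smul_eq_mul]
  omega

lemma s7_shape_getD (a b c i : ℕ) :
    (shape a b c).getD i 0 =
      if i < a then 3 else if i < a + b then 2 else if i < a + b + c then 1 else 0 := by
  unfold shape
  rcases lt_or_ge i (a + b) with h | h
  · rw [List.getD_append _ _ _ _ (by simp; omega)]
    rcases lt_or_ge i a with h2 | h2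
    · rw [List.getD_append _ _ _ _ (by simp; omega), s7_getD_replicate]
      split_ifs <;> omega
    · rw [List.getD_append_right _ _ _ _ (by simp; omega), List.length_replicate,
        s7_getD_replicate]
      split_ifs <;> omega
  · rw [List.getD_append_right _ _ _ _ (by simp; omega)]
    simp only [List.length_append, List.length_replicate, s7_getD_replicate]
    split_ifs <;> omega

lemma s7_rowStart_shape (a b c i : ℕ) :
    rowStart (shape a b c) i = 3 * min i a + 2 * min (i - a) b + min (i - a - b) c := by
  unfold rowStart shape
  rw [List.take_append, List.take_append]
  simp only [List.take_replicate, List.length_replicate, List.length_append, List.sum_append,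
    List.sum_replicate, smul_eq_mul]
  omega

lemma s7_getD_le_max (μ : List ℕ) : ∀ i, i < μ.length → μ.getD i 0 ≤ μ.foldr max 0 := by
  induction μ with
  | nil => intro i h; simp at h
  | cons x xs ih =>
    intro i h
    cases i with
    | zero =>
      simp only [List.getD_cons_zero, List.foldr_cons]
      exact le_max_left _ _
    | succ j =>
      have := ih j (by simpa using h)
      simp only [List.getD_cons_succ, List.foldr_cons]
      exact le_trans this (le_max_right _ _)

lemma s7_mem_cellsOf (μ : List ℕ) (c : ℕ × ℕ) :
    c ∈ cellsOf μ ↔ c.1 < μ.length ∧ c.2 < μ.getD c.1 0 := by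
  unfold cellsOf
  simp only [Finset.mem_filter, Finset.mem_product, Finset.mem_range]
  constructor
  · rintro ⟨⟨h1, _⟩, h3⟩
    exact ⟨h1, h3⟩
  · rintro ⟨h1, h2⟩
    exact ⟨⟨h1, lt_of_lt_of_le h2 (s7_getD_le_max μ _ h1)⟩, h2⟩

lemma s7_getD_take (L : List ℕ) {j t : ℕ} (h : t < j) : (L.take j).getD t 0 = L.getD t 0 := by
  rcases lt_or_ge t L.length with h2 | h2
  · rw [List.getD_eq_getElem _ _ (by rw [List.length_take]; omega),
      List.getD_eq_getElem _ _ h2, List.getElem_take]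
  · rw [List.getD_eq_default _ _ (by rw [List.length_take]; omega), List.getD_eq_default _ _ h2]

lemma s7_getD_drop (L : List ℕ) (j t : ℕ) : (L.drop j).getD t 0 = L.getD (j + t) 0 := by
  rcases lt_or_ge (j + t) L.length with h2 | h2
  · rw [List.getD_eq_getElem _ _ (by rw [List.length_drop]; omega),
      List.getD_eq_getElem _ _ h2, List.getElem_drop]
  · rw [List.getD_eq_default _ _ (by rw [List.length_drop]; omega), List.getD_eq_default _ _ h2]

/-- The stopping predicate for the splitting index. -/
def s7P {n : ℕ} (D : DyckPath n) (l : ℕ) (L : List ℕ) (t : ℕ) : Prop :=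
  t = (L.drop (3*l+3)).length ∨ ¬ D.prec ((L.drop (3*l+3)).getD t 0) (L.getD (3*l+2) 0)

lemma s7P_ex {n : ℕ} (D : DyckPath n) (l : ℕ) (L : List ℕ) : ∃ t, s7P D l L t :=
  ⟨_, Or.inl rfl⟩

/-- The splitting index: number of initial one-column entries that precede `z`. -/
noncomputable def s7k {n : ℕ} (D : DyckPath n) (l : ℕ) (L : List ℕ) : ℕ :=
  Nat.find (s7P_ex D l L)

/-- The image word of the injection. -/
noncomputable def fWord {n : ℕ} (D : DyckPath n) (l : ℕ) (L : List ℕ) : List ℕ :=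
  L.take (3*l+2) ++ (L.drop (3*l+3)).take (s7k D l L) ++
    L.getD (3*l+2) 0 :: (L.drop (3*l+3)).drop (s7k D l L)

lemma s7k_le {n : ℕ} (D : DyckPath n) (l : ℕ) (L : List ℕ) :
    s7k D l L ≤ (L.drop (3*l+3)).length := by
  unfold s7k
  exact Nat.find_le (Or.inl rfl)

lemma s7k_spec {n : ℕ} (D : DyckPath n) (l : ℕ) (L : List ℕ) :
    s7k D l L = (L.drop (3*l+3)).length ∨
      ¬ D.prec ((L.drop (3*l+3)).getD (s7k D l L) 0) (L.getD (3*l+2) 0) := by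
  have h := Nat.find_spec (s7P_ex D l L)
  unfold s7P at h
  exact h

lemma s7_precB {n : ℕ} (D : DyckPath n) (l : ℕ) (L : List ℕ) {t : ℕ} (ht : t < s7k D l L) :
    D.prec (L.getD (3*l+3+t) 0) (L.getD (3*l+2) 0) := by
  unfold s7k at ht
  have h := Nat.find_min (s7P_ex D l L) ht
  unfold s7P at h
  push_neg at h
  have h2 := h.2
  rwa [s7_getD_drop] at h2

lemma s7_chain_top {n : ℕ} (D : DyckPath n) (hb2 : D.bounce 2 = n) {x y z w : ℕ}
    (hx1 : 1 ≤ x) (hxn : x ≤ n) (hyn : y ≤ n) (hzn : z ≤ n) (hwn : w ≤ n)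
    (hxy : D.prec x y) (hyz : D.prec y z) : ¬ D.prec z w := by
  have h1 : D.d 1 ≤ D.d x := D.mono 1 x le_rfl hx1 hxn
  have hm0 : D.bounce 0 = D.d 1 := rfl
  have hxy2 := hxy.2
  have h2 : D.d (D.bounce 0 + 1) ≤ D.d y := D.mono _ _ (by omega) (by omega) hyn
  have hm1 : D.bounce 1 = D.d (D.bounce 0 + 1) := rfl
  have hyz2 := hyz.2
  have h3 : D.d (D.bounce 1 + 1) ≤ D.d z := D.mono _ _ (by omega) (by omega) hzn
  have hb : D.bounce 2 = D.d (D.bounce 1 + 1) := rfl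
  rintro ⟨-, hlt⟩
  omega

lemma s7_bnd {n : ℕ} {L : List ℕ} (hperm : L.Perm (List.map (· + 1) (List.range n)))
    {p : ℕ} (hp : p < n) : 1 ≤ L.getD p 0 ∧ L.getD p 0 ≤ n := by
  have hlen : L.length = n := by simpa using hperm.length_eq
  have hmem : L.getD p 0 ∈ L := by
    rw [List.getD_eq_getElem _ _ (by omega)]
    exact List.getElem_mem _
  have := (hperm.mem_iff).1 hmem
  simp only [List.mem_map, List.mem_range] at this
  obtain ⟨a, ha, he⟩ := this
  omega

lemma s7_zmax {n : ℕ} (D : DyckPath n) (hb2 : D.bounce 2 = n) (l m : ℕ)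
    (hn : n = 3*l+3+m) (L : List ℕ) (hL : D.IsPTab (shape (l+1) 0 m) L) :
    ∀ w, w ≤ n → ¬ D.prec (L.getD (3*l+2) 0) w := by
  obtain ⟨hperm, -, hhor, -⟩ := hL
  have hED : ∀ j, entry (shape (l+1) 0 m) L l j = L.getD (3*l+j) 0 := by
    intro j
    unfold entry
    rw [s7_rowStart_shape]
    congr 1
    omega
  have hxy := hhor l 0 (by rw [s7_shape_length]; omega)
    (by rw [s7_shape_getD]; split_ifs <;> omega)
  have hyz := hhor l 1 (by rw [s7_shape_length]; omega)
    (by rw [s7_shape_getD]; split_ifs <;> omega)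
  rw [hED 0, hED (0+1)] at hxy
  rw [hED 1, hED (1+1)] at hyz
  rw [show 3*l+0 = 3*l by omega] at hxy
  intro w hw
  exact s7_chain_top D hb2 (s7_bnd hperm (by omega : 3*l < n)).1
    (s7_bnd hperm (by omega : 3*l < n)).2 (s7_bnd hperm (by omega : 3*l+1 < n)).2
    (s7_bnd hperm (by omega : 3*l+2 < n)).2 hw hxy hyz

/-- the cell bijection -/
def s7phi (l k : ℕ) (c : ℕ × ℕ) : ℕ × ℕ :=
  (if c.1 = l ∧ c.2 = 2 then l+1+k else if c.1 < l+1+k then c.1 else c.1+1,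
   if c.1 = l ∧ c.2 = 2 then 0 else c.2)

def s7psi (l k : ℕ) (c : ℕ × ℕ) : ℕ × ℕ :=
  (if c.1 = l+1+k ∧ c.2 = 0 then l else if c.1 < l+1+k then c.1 else c.1-1,
   if c.1 = l+1+k ∧ c.2 = 0 then 2 else c.2)

lemma s7phi_fst (l k : ℕ) (c : ℕ × ℕ) :
    (s7phi l k c).1 = if c.1 = l ∧ c.2 = 2 then l+1+k else
      if c.1 < l+1+k then c.1 else c.1+1 := rfl

lemma s7phi_snd (l k : ℕ) (c : ℕ × ℕ) :
    (s7phi l k c).2 = if c.1 = l ∧ c.2 = 2 then 0 else c.2 := rfl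

lemma s7psi_fst (l k : ℕ) (c : ℕ × ℕ) :
    (s7psi l k c).1 = if c.1 = l+1+k ∧ c.2 = 0 then l else
      if c.1 < l+1+k then c.1 else c.1-1 := rfl

lemma s7psi_snd (l k : ℕ) (c : ℕ × ℕ) :
    (s7psi l k c).2 = if c.1 = l+1+k ∧ c.2 = 0 then 2 else c.2 := rfl

lemma s7_key {n : ℕ} (D : DyckPath n) (hb2 : D.bounce 2 = n) (l m : ℕ)
    (hn : n = 3*l+3+m) (L : List ℕ) (hL : D.IsPTab (shape (l+1) 0 m) L) :
    D.IsPTab (shape l 1 (m+1)) (fWord D l L) ∧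
      D.invNum (shape l 1 (m+1)) (fWord D l L) = D.invNum (shape (l+1) 0 m) L := by
  have hzmax : ∀ w, w ≤ n → ¬ D.prec (L.getD (3*l+2) 0) w := s7_zmax D hb2 l m hn L hL
  obtain ⟨hperm, hsum, hhor, hver⟩ := hL
  have hlen : L.length = n := by simpa using hperm.length_eq
  set k := s7k D l L with hkdef
  have hSlen : (L.drop (3*l+3)).length = m := by rw [List.length_drop]; omega
  have hkm : k ≤ m := by have := s7k_le D l L; omega
  have hprecB : ∀ t, t < k → D.prec (L.getD (3*l+3+t) 0) (L.getD (3*l+2) 0) := by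
    intro t ht
    rw [hkdef] at ht
    exact s7_precB D l L ht
  have hfw : fWord D l L = (L.take (3*l+2) ++ (L.drop (3*l+3)).take k) ++
      L.getD (3*l+2) 0 :: (L.drop (3*l+3)).drop k := by
    rw [hkdef]; rfl
  have hAlen : (L.take (3*l+2)).length = 3*l+2 := by rw [List.length_take]; omega
  have hABlen : (L.take (3*l+2) ++ (L.drop (3*l+3)).take k).length = 3*l+2+k := by
    rw [List.length_append, List.length_take, List.length_take]; omega
  have hvL : ∀ p, p < 3*l+2 → (fWord D l L).getD p 0 = L.getD p 0 := by
    intro p hp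
    rw [hfw, List.getD_append _ _ _ _ (by omega), List.getD_append _ _ _ _ (by omega)]
    exact s7_getD_take _ hp
  have hvMid : ∀ t, t < k → (fWord D l L).getD (3*l+2+t) 0 = L.getD (3*l+3+t) 0 := by
    intro t ht
    rw [hfw, List.getD_append _ _ _ _ (by omega),
      List.getD_append_right _ _ _ _ (by omega), hAlen,
      show 3*l+2+t - (3*l+2) = t by omega, s7_getD_take _ ht, s7_getD_drop]
  have hvZ : (fWord D l L).getD (3*l+2+k) 0 = L.getD (3*l+2) 0 := by
    rw [hfw, List.getD_append_right _ _ _ _ (by omega), hABlen,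
      show 3*l+2+k - (3*l+2+k) = 0 by omega, List.getD_cons_zero]
  have hvHi : ∀ t, k < t → (fWord D l L).getD (3*l+2+t) 0 = L.getD (3*l+2+t) 0 := by
    intro t ht
    rw [hfw, List.getD_append_right _ _ _ _ (by omega), hABlen,
      show 3*l+2+t - (3*l+2+k) = (t-k-1)+1 by omega, List.getD_cons_succ,
      s7_getD_drop, s7_getD_drop, show 3*l+3+(k+(t-k-1)) = 3*l+2+t by omega]
  have hED : ∀ i j, i < l+2 → entry (shape (l+1) 0 m) L i j = L.getD (3*i+j) 0 := by
    intro i j hi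
    unfold entry
    rw [show rowStart (shape (l+1) 0 m) i + j = 3*i+j by rw [s7_rowStart_shape]; omega]
  have hED2 : ∀ i j, l+1 ≤ i → i ≤ l+1+m →
      entry (shape (l+1) 0 m) L i j = L.getD (3*l+2+(i-l)+j) 0 := by
    intro i j hi hi2
    unfold entry
    rw [show rowStart (shape (l+1) 0 m) i + j = 3*l+2+(i-l)+j by rw [s7_rowStart_shape]; omega]
  have hEC : ∀ i j, i ≤ l →
      entry (shape l 1 (m+1)) (fWord D l L) i j = (fWord D l L).getD (3*i+j) 0 := by
    intro i j hi
    unfold entry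
    rw [show rowStart (shape l 1 (m+1)) i + j = 3*i+j by rw [s7_rowStart_shape]; omega]
  have hEC2 : ∀ i j, l+1 ≤ i → i ≤ l+m+2 →
      entry (shape l 1 (m+1)) (fWord D l L) i j = (fWord D l L).getD (3*l+1+(i-l)+j) 0 := by
    intro i j hi hi2
    unfold entry
    rw [show rowStart (shape l 1 (m+1)) i + j = 3*l+1+(i-l)+j by rw [s7_rowStart_shape]; omega]
  have hyzP : D.prec (L.getD (3*l+1) 0) (L.getD (3*l+2) 0) := by
    have h := hhor l 1 (by rw [s7_shape_length]; omega)
      (by rw [s7_shape_getD]; split_ifs <;> omega)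
    rw [hED l 1 (by omega), hED l (1+1) (by omega)] at h
    rwa [show 3*l+(1+1) = 3*l+2 by omega] at h
  have hxzP : D.prec (L.getD (3*l) 0) (L.getD (3*l+2) 0) := by
    have h := hhor l 0 (by rw [s7_shape_length]; omega)
      (by rw [s7_shape_getD]; split_ifs <;> omega)
    rw [hED l 0 (by omega), hED l (0+1) (by omega)] at h
    rw [show 3*l+0 = 3*l by omega, show 3*l+(0+1) = 3*l+1 by omega] at h
    refine ⟨h.1, ?_⟩
    have hb := s7_bnd hperm (by omega : 3*l+1 < n)
    have hge := D.ge_self (L.getD (3*l+1) 0) hb.1 hb.2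
    have h2 := hyzP.2
    have h1 := h.2
    omega
  -- the new word is a P-tableau
  have hfperm : (fWord D l L).Perm (List.map (· + 1) (List.range n)) := by
    refine List.Perm.trans ?_ hperm
    rw [hfw, List.append_assoc]
    refine List.Perm.trans (List.Perm.append_left _ List.perm_middle) ?_
    rw [List.take_append_drop]
    conv_rhs => rw [← List.take_append_drop (3*l+2) L]
    rw [List.drop_eq_getElem_cons (show 3*l+2 < L.length by omega),
      ← List.getD_eq_getElem L 0 (show 3*l+2 < L.length by omega),
      show 3*l+2+1 = 3*l+3 by omega]
  have hsum' : (shape l 1 (m+1)).sum = n := by rw [s7_shape_sum]; omega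
  have hhor' : ∀ i j : ℕ, i < (shape l 1 (m+1)).length → j + 1 < (shape l 1 (m+1)).getD i 0 →
      D.prec (entry (shape l 1 (m+1)) (fWord D l L) i j)
        (entry (shape l 1 (m+1)) (fWord D l L) i (j+1)) := by
    intro i j hi hj
    rw [s7_shape_length] at hi
    rw [s7_shape_getD] at hj
    by_cases h1 : i < l
    · rw [if_pos h1] at hj
      rw [hEC i j (by omega), hEC i (j+1) (by omega), hvL _ (by omega), hvL _ (by omega)]
      have h := hhor i j (by rw [s7_shape_length]; omega)
        (by rw [s7_shape_getD]; split_ifs <;> omega)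
      rwa [hED i j (by omega), hED i (j+1) (by omega)] at h
    · by_cases h2 : i = l
      · rw [h2] at hj ⊢
        rw [if_neg (show ¬ l < l by omega), if_pos (show l < l + 1 by omega)] at hj
        rw [hEC l j (by omega), hEC l (j+1) (by omega), hvL _ (by omega), hvL _ (by omega)]
        have h := hhor l j (by rw [s7_shape_length]; omega)
          (by rw [s7_shape_getD]; split_ifs <;> omega)
        rwa [hED l j (by omega), hED l (j+1) (by omega)] at h
      · rw [if_neg h1, if_neg (by omega)] at hj
        split_ifs at hj <;> omega
  have hver' : ∀ i j : ℕ, i + 1 < (shape l 1 (m+1)).length →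
      j < (shape l 1 (m+1)).getD (i+1) 0 →
      ¬ D.prec (entry (shape l 1 (m+1)) (fWord D l L) (i+1) j)
        (entry (shape l 1 (m+1)) (fWord D l L) i j) := by
    intro i j hi hj
    rw [s7_shape_length] at hi
    rw [s7_shape_getD] at hj
    by_cases h1 : i + 1 < l
    · rw [if_pos h1] at hj
      rw [hEC (i+1) j (by omega), hEC i j (by omega), hvL _ (by omega), hvL _ (by omega)]
      have h := hver i j (by rw [s7_shape_length]; omega)
        (by rw [s7_shape_getD]; split_ifs <;> omega)
      rwa [hED (i+1) j (by omega), hED i j (by omega)] at h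
    · by_cases h2 : i + 1 = l
      · rw [if_neg h1, if_pos (by omega)] at hj
        rw [hEC (i+1) j (by omega), hEC i j (by omega), hvL _ (by omega), hvL _ (by omega)]
        have h := hver i j (by rw [s7_shape_length]; omega)
          (by rw [s7_shape_getD]; split_ifs <;> omega)
        rwa [hED (i+1) j (by omega), hED i j (by omega)] at h
      · by_cases h3 : i = l
        · rw [h3] at hj ⊢
          rw [if_neg (show ¬ l + 1 < l by omega), if_neg (show ¬ l + 1 < l + 1 by omega),
            if_pos (show l + 1 < l + 1 + (m + 1) by omega)] at hj
          have hj1 : j = 0 := by omega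
          subst hj1
          rw [hEC2 (l+1) 0 (by omega) (by omega), hEC l 0 (by omega)]
          rcases Nat.eq_zero_or_pos k with hk0 | hkpos
          · rw [show 3*l+1+((l+1)-l)+0 = 3*l+2+k by omega, hvZ,
              hvL (3*l+0) (by omega : 3*l+0 < 3*l+2)]
            exact hzmax _ (s7_bnd hperm (by omega : 3*l+0 < n)).2
          · rw [show 3*l+1+((l+1)-l)+0 = 3*l+2+0 by omega, hvMid 0 hkpos,
              hvL (3*l+0) (by omega : 3*l+0 < 3*l+2)]
            have h := hver l 0 (by rw [s7_shape_length]; omega)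
              (by rw [s7_shape_getD]; split_ifs <;> omega)
            rw [hED (l+1) 0 (by omega), hED l 0 (by omega)] at h
            rwa [show 3*(l+1)+0 = 3*l+3+0 by omega] at h
        · rw [if_neg (show ¬ i + 1 < l by omega), if_neg (show ¬ i + 1 < l + 1 by omega),
            if_pos (show i + 1 < l + 1 + (m + 1) by omega)] at hj
          have hj1 : j = 0 := by omega
          subst hj1
          obtain ⟨t, rfl⟩ : ∃ t, i = l+1+t := ⟨i-(l+1), by omega⟩
          have htm : t + 1 ≤ m := by omega
          rw [hEC2 (l+1+t+1) 0 (by omega) (by omega), hEC2 (l+1+t) 0 (by omega) (by omega),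
            show 3*l+1+((l+1+t+1)-l)+0 = 3*l+2+(t+1) by omega,
            show 3*l+1+((l+1+t)-l)+0 = 3*l+2+t by omega]
          rcases lt_trichotomy (t+1) k with hc | hc | hc
          · rw [hvMid (t+1) hc, hvMid t (by omega)]
            have h := hver (l+1+t) 0 (by rw [s7_shape_length]; omega)
              (by rw [s7_shape_getD]; split_ifs <;> omega)
            rw [hED2 (l+1+t+1) 0 (by omega) (by omega), hED2 (l+1+t) 0 (by omega) (by omega),
              show 3*l+2+((l+1+t+1)-l)+0 = 3*l+3+(t+1) by omega,
              show 3*l+2+((l+1+t)-l)+0 = 3*l+3+t by omega] at h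
            exact h
          · rw [hc, hvZ, hvMid t (by omega)]
            exact hzmax _ (s7_bnd hperm (by omega : 3*l+3+t < n)).2
          · rcases Nat.lt_or_ge k t with hkt | hkt
            · rw [hvHi (t+1) (by omega), hvHi t hkt]
              have h := hver (l+1+(t-1)) 0 (by rw [s7_shape_length]; omega)
                (by rw [s7_shape_getD]; split_ifs <;> omega)
              rw [hED2 (l+1+(t-1)+1) 0 (by omega) (by omega),
                hED2 (l+1+(t-1)) 0 (by omega) (by omega),
                show 3*l+2+((l+1+(t-1)+1)-l)+0 = 3*l+2+(t+1) by omega,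
                show 3*l+2+((l+1+(t-1))-l)+0 = 3*l+2+t by omega] at h
              exact h
            · have hkt' : k = t := by omega
              rw [← hkt', hvZ, hvHi (k+1) (by omega)]
              have hsp := s7k_spec D l L
              rw [← hkdef, hSlen, s7_getD_drop] at hsp
              rcases hsp with hsp | hsp
              · omega
              · rwa [show 3*l+2+(k+1) = 3*l+3+k by omega]
  -- cells and the bijection
  have hmemD : ∀ c : ℕ × ℕ, c ∈ cellsOf (shape (l+1) 0 m) ↔
      ((c.1 < l+1 ∧ c.2 < 3) ∨ (l+1 ≤ c.1 ∧ c.1 < l+1+m ∧ c.2 = 0)) := by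
    intro c
    rw [s7_mem_cellsOf, s7_shape_length, s7_shape_getD]
    split_ifs <;> omega
  have hmemC : ∀ c : ℕ × ℕ, c ∈ cellsOf (shape l 1 (m+1)) ↔
      ((c.1 < l ∧ c.2 < 3) ∨ (c.1 = l ∧ c.2 < 2) ∨
        (l+1 ≤ c.1 ∧ c.1 < l+m+2 ∧ c.2 = 0)) := by
    intro c
    rw [s7_mem_cellsOf, s7_shape_length, s7_shape_getD]
    split_ifs <;> omega
  have hphimem : ∀ c : ℕ × ℕ, c ∈ cellsOf (shape (l+1) 0 m) →
      s7phi l k c ∈ cellsOf (shape l 1 (m+1)) := by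
    intro c hc
    rw [hmemD] at hc
    rw [hmemC, s7phi_fst, s7phi_snd]
    split_ifs <;> omega
  have hpsimem : ∀ c : ℕ × ℕ, c ∈ cellsOf (shape l 1 (m+1)) →
      s7psi l k c ∈ cellsOf (shape (l+1) 0 m) := by
    intro c hc
    rw [hmemC] at hc
    rw [hmemD, s7psi_fst, s7psi_snd]
    split_ifs <;> omega
  have hpsiphi : ∀ c : ℕ × ℕ, c ∈ cellsOf (shape (l+1) 0 m) → s7psi l k (s7phi l k c) = c := by
    intro c hc
    rw [hmemD] at hc
    rw [Prod.ext_iff, s7psi_fst, s7psi_snd, s7phi_fst, s7phi_snd]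
    constructor <;> split_ifs <;> omega
  have hphipsi : ∀ c : ℕ × ℕ, c ∈ cellsOf (shape l 1 (m+1)) → s7phi l k (s7psi l k c) = c := by
    intro c hc
    rw [hmemC] at hc
    rw [Prod.ext_iff, s7phi_fst, s7phi_snd, s7psi_fst, s7psi_snd]
    constructor <;> split_ifs <;> omega
  have hEphi : ∀ c : ℕ × ℕ, c ∈ cellsOf (shape (l+1) 0 m) →
      entry (shape l 1 (m+1)) (fWord D l L) (s7phi l k c).1 (s7phi l k c).2
        = entry (shape (l+1) 0 m) L c.1 c.2 := by
    intro c hc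
    rw [hmemD] at hc
    rw [s7phi_fst, s7phi_snd]
    by_cases h1 : c.1 = l ∧ c.2 = 2
    · rw [if_pos h1, if_pos h1, hEC2 (l+1+k) 0 (by omega) (by omega),
        hED c.1 c.2 (by omega), show 3*l+1+((l+1+k)-l)+0 = 3*l+2+k by omega, hvZ,
        h1.1, h1.2]
    · rw [if_neg h1, if_neg h1]
      by_cases h2 : c.1 < l+1+k
      · rw [if_pos h2]
        rcases hc with ⟨ha, hb⟩ | ⟨ha, ha2, hb⟩
        · rw [hEC c.1 c.2 (by omega), hED c.1 c.2 (by omega), hvL _ (by omega)]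
        · rw [hEC2 c.1 c.2 (by omega) (by omega), hED2 c.1 c.2 (by omega) (by omega),
            show 3*l+1+(c.1-l)+c.2 = 3*l+2+(c.1-l-1) by omega, hvMid (c.1-l-1) (by omega),
            show 3*l+3+(c.1-l-1) = 3*l+2+(c.1-l)+c.2 by omega]
      · rw [if_neg h2]
        rcases hc with ⟨ha, hb⟩ | ⟨ha, ha2, hb⟩
        · exact absurd (by omega : c.1 < l+1+k) h2
        · rw [hEC2 (c.1+1) c.2 (by omega) (by omega), hED2 c.1 c.2 (by omega) (by omega),
            show 3*l+1+((c.1+1)-l)+c.2 = 3*l+2+(c.1-l-1+1) by omega,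
            hvHi (c.1-l-1+1) (by omega),
            show 3*l+2+(c.1-l-1+1) = 3*l+2+(c.1-l)+c.2 by omega]
  have hRow : ∀ c c' : ℕ × ℕ, c ∈ cellsOf (shape (l+1) 0 m) → c' ∈ cellsOf (shape (l+1) 0 m) →
      D.Incomp (entry (shape (l+1) 0 m) L c.1 c.2) (entry (shape (l+1) 0 m) L c'.1 c'.2) →
      ((s7phi l k c).1 < (s7phi l k c').1 ↔ c.1 < c'.1) := by
    intro c c' hc hc' hinc
    rw [hmemD] at hc hc'
    rw [s7phi_fst, s7phi_fst]
    by_cases h1 : c.1 = l ∧ c.2 = 2 <;> by_cases h2 : c'.1 = l ∧ c'.2 = 2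
    · rw [if_pos h1, if_pos h2]; omega
    · rw [if_pos h1, if_neg h2]
      by_cases h3 : c'.1 < l+1+k
      · rw [if_pos h3]
        rcases hc' with ⟨ha, hb⟩ | ⟨ha, ha2, hb⟩
        · omega
        · exfalso
          apply hinc.2
          rw [hED2 c'.1 c'.2 (by omega) (by omega), hED c.1 c.2 (by omega), h1.1, h1.2,
            show 3*l+2+(c'.1-l)+c'.2 = 3*l+3+(c'.1-l-1) by omega]
          exact hprecB (c'.1-l-1) (by omega)
      · rw [if_neg h3]; omega
    · rw [if_neg h1, if_pos h2]
      by_cases h3 : c.1 < l+1+k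
      · rw [if_pos h3]
        rcases hc with ⟨ha, hb⟩ | ⟨ha, ha2, hb⟩
        · by_cases h4 : c.1 = l
          · exfalso
            apply hinc.1
            rw [hED c.1 c.2 (by omega), hED c'.1 c'.2 (by omega), h2.1, h2.2, h4]
            have hb2' : c.2 = 0 ∨ c.2 = 1 := by omega
            rcases hb2' with hb2' | hb2' <;> rw [hb2']
            · rw [show 3*l+0 = 3*l by omega]; exact hxzP
            · exact hyzP
          · omega
        · exfalso
          apply hinc.1
          rw [hED2 c.1 c.2 (by omega) (by omega), hED c'.1 c'.2 (by omega), h2.1, h2.2,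
            show 3*l+2+(c.1-l)+c.2 = 3*l+3+(c.1-l-1) by omega]
          exact hprecB (c.1-l-1) (by omega)
      · rw [if_neg h3]; omega
    · rw [if_neg h1, if_neg h2]
      split_ifs <;> omega
  refine ⟨⟨hfperm, hsum', hhor', hver'⟩, ?_⟩
  unfold DyckPath.invNum
  refine (Finset.card_bij' (fun c _ => (s7phi l k c.1, s7phi l k c.2))
    (fun c _ => (s7psi l k c.1, s7psi l k c.2)) ?_ ?_ ?_ ?_).symm
  · rintro ⟨p, q⟩ hpq
    rw [Finset.mem_filter, Finset.mem_product] at hpq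
    dsimp only at hpq
    obtain ⟨⟨hp, hq⟩, hrow, hval, hinc⟩ := hpq
    rw [Finset.mem_filter, Finset.mem_product]
    dsimp only
    refine ⟨⟨hphimem p hp, hphimem q hq⟩, (hRow p q hp hq hinc).2 hrow, ?_, ?_⟩
    · rw [hEphi p hp, hEphi q hq]; exact hval
    · rw [hEphi p hp, hEphi q hq]; exact hinc
  · rintro ⟨p, q⟩ hpq
    rw [Finset.mem_filter, Finset.mem_product] at hpq
    dsimp only at hpq
    obtain ⟨⟨hp, hq⟩, hrow, hval, hinc⟩ := hpq
    rw [Finset.mem_filter, Finset.mem_product]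
    dsimp only
    have hp' := hpsimem p hp
    have hq' := hpsimem q hq
    have hep : entry (shape (l+1) 0 m) L (s7psi l k p).1 (s7psi l k p).2
        = entry (shape l 1 (m+1)) (fWord D l L) p.1 p.2 := by
      have h := hEphi (s7psi l k p) hp'
      rw [hphipsi p hp] at h
      exact h.symm
    have heq2 : entry (shape (l+1) 0 m) L (s7psi l k q).1 (s7psi l k q).2
        = entry (shape l 1 (m+1)) (fWord D l L) q.1 q.2 := by
      have h := hEphi (s7psi l k q) hq'
      rw [hphipsi q hq] at h
      exact h.symm
    refine ⟨⟨hp', hq'⟩, ?_, ?_, ?_⟩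
    · have h := hRow (s7psi l k p) (s7psi l k q) hp' hq' (by rw [hep, heq2]; exact hinc)
      rw [hphipsi p hp, hphipsi q hq] at h
      exact h.1 hrow
    · rw [hep, heq2]; exact hval
    · rw [hep, heq2]; exact hinc
  · rintro ⟨p, q⟩ hpq
    rw [Finset.mem_filter, Finset.mem_product] at hpq
    dsimp only at hpq
    obtain ⟨⟨hp, hq⟩, -⟩ := hpq
    dsimp only
    rw [hpsiphi p hp, hpsiphi q hq]
  · rintro ⟨p, q⟩ hpq
    rw [Finset.mem_filter, Finset.mem_product] at hpq
    dsimp only at hpq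
    obtain ⟨⟨hp, hq⟩, -⟩ := hpq
    dsimp only
    rw [hphipsi p hp, hphipsi q hq]

lemma s7_tail_absurd {n : ℕ} (D : DyckPath n) (hb2 : D.bounce 2 = n) (l m : ℕ)
    (hn : n = 3*l+3+m) (L1 L2 : List ℕ)
    (h1 : D.IsPTab (shape (l+1) 0 m) L1) (h2 : D.IsPTab (shape (l+1) 0 m) L2)
    (hR : (L1.drop (3*l+3)).take (s7k D l L1) ++
        L1.getD (3*l+2) 0 :: (L1.drop (3*l+3)).drop (s7k D l L1)
      = (L2.drop (3*l+3)).take (s7k D l L2) ++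
        L2.getD (3*l+2) 0 :: (L2.drop (3*l+3)).drop (s7k D l L2))
    (hlt : s7k D l L1 < s7k D l L2) : False := by
  have hlen1 : L1.length = n := by simpa using h1.1.length_eq
  have hlen2 : L2.length = n := by simpa using h2.1.length_eq
  have hS1 : (L1.drop (3*l+3)).length = m := by rw [List.length_drop]; omega
  have hS2 : (L2.drop (3*l+3)).length = m := by rw [List.length_drop]; omega
  have hk1 : s7k D l L1 ≤ m := by have := s7k_le D l L1; omega
  have hk2 : s7k D l L2 ≤ m := by have := s7k_le D l L2; omega
  have hB1len : ((L1.drop (3*l+3)).take (s7k D l L1)).length = s7k D l L1 := by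
    rw [List.length_take]; omega
  have hB2len : ((L2.drop (3*l+3)).take (s7k D l L2)).length = s7k D l L2 := by
    rw [List.length_take]; omega
  have hv1 : ((L1.drop (3*l+3)).take (s7k D l L1) ++
      L1.getD (3*l+2) 0 :: (L1.drop (3*l+3)).drop (s7k D l L1)).getD (s7k D l L1) 0
      = L1.getD (3*l+2) 0 := by
    rw [List.getD_append_right _ _ _ _ (by omega), hB1len, Nat.sub_self, List.getD_cons_zero]
  have hv2 : ((L2.drop (3*l+3)).take (s7k D l L2) ++
      L2.getD (3*l+2) 0 :: (L2.drop (3*l+3)).drop (s7k D l L2)).getD (s7k D l L1) 0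
      = L2.getD (3*l+3+(s7k D l L1)) 0 := by
    rw [List.getD_append _ _ _ _ (by omega), s7_getD_take _ hlt, s7_getD_drop]
  rw [hR, hv2] at hv1
  have hp := s7_precB D l L2 hlt
  rw [hv1] at hp
  exact s7_zmax D hb2 l m hn L1 h1 _ (s7_bnd h2.1 (by omega : 3*l+2 < n)).2 hp

lemma s7_inj {n : ℕ} (D : DyckPath n) (hb2 : D.bounce 2 = n) (l m : ℕ)
    (hn : n = 3*l+3+m) (L1 L2 : List ℕ)
    (h1 : D.IsPTab (shape (l+1) 0 m) L1) (h2 : D.IsPTab (shape (l+1) 0 m) L2)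
    (heq : fWord D l L1 = fWord D l L2) : L1 = L2 := by
  have hlen1 : L1.length = n := by simpa using h1.1.length_eq
  have hlen2 : L2.length = n := by simpa using h2.1.length_eq
  unfold fWord at heq
  rw [List.append_assoc, List.append_assoc] at heq
  obtain ⟨hA, hR⟩ := List.append_inj heq
    (by rw [List.length_take, List.length_take]; omega)
  have hk12 : s7k D l L1 = s7k D l L2 := by
    rcases lt_trichotomy (s7k D l L1) (s7k D l L2) with h | h | h
    · exact absurd h (fun h => s7_tail_absurd D hb2 l m hn L1 L2 h1 h2 hR h)
    · exact h
    · exact absurd h (fun h => s7_tail_absurd D hb2 l m hn L2 L1 h2 h1 hR.symm h)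
  have hS1 : (L1.drop (3*l+3)).length = m := by rw [List.length_drop]; omega
  have hS2 : (L2.drop (3*l+3)).length = m := by rw [List.length_drop]; omega
  have hk1 : s7k D l L1 ≤ m := by have := s7k_le D l L1; omega
  obtain ⟨hB, hZC⟩ := List.append_inj hR
    (by rw [List.length_take, List.length_take, hk12]; omega)
  injection hZC with hzz hC
  have hdrop : L1.drop (3*l+3) = L2.drop (3*l+3) := by
    conv_lhs => rw [← List.take_append_drop (s7k D l L1) (L1.drop (3*l+3))]
    conv_rhs => rw [← List.take_append_drop (s7k D l L2) (L2.drop (3*l+3))]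
    rw [hB, hC]
  have d1 : L1 = L1.take (3*l+2) ++ L1.getD (3*l+2) 0 :: L1.drop (3*l+3) := by
    conv_lhs => rw [← List.take_append_drop (3*l+2) L1]
    rw [List.drop_eq_getElem_cons (show 3*l+2 < L1.length by omega),
      ← List.getD_eq_getElem L1 0 (show 3*l+2 < L1.length by omega),
      show 3*l+2+1 = 3*l+3 by omega]
  have d2 : L2 = L2.take (3*l+2) ++ L2.getD (3*l+2) 0 :: L2.drop (3*l+3) := by
    conv_lhs => rw [← List.take_append_drop (3*l+2) L2]
    rw [List.drop_eq_getElem_cons (show 3*l+2 < L2.length by omega),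
      ← List.getD_eq_getElem L2 0 (show 3*l+2 < L2.length by omega),
      show 3*l+2+1 = 3*l+3 by omega]
  rw [d1, d2, hA, hzz, hdrop]

end Stmt7Aux

/-- The inversion-preserving injection `f` from `P`-tableaux of shape
`3^{l+1} 1^{n-3l-3}` into those of shape `3^l 2 1^{n-3l-2}`. -/
theorem exists_injection_f
    (n : ℕ) (D : DyckPath n) (h3 : D.BounceThree)
    (l : ℕ) (hl : l ≤ min (n - D.m1) (min (D.m1 - D.m0) D.m0)) :
    ∃ f : {L : List ℕ // D.IsPTab (shape (l + 1) 0 (n - 3 * l - 3)) L} →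
        {L : List ℕ // D.IsPTab (shape l 1 (n - 3 * l - 2)) L},
      Function.Injective f ∧
      ∀ T, D.invNum (shape l 1 (n - 3 * l - 2)) (f T).1
        = D.invNum (shape (l + 1) 0 (n - 3 * l - 3)) T.1 := by
  have hb2 : D.bounce 2 = n := h3.2.2
  refine ⟨fun T => ⟨fWord D l T.1, ?_⟩, ?_, ?_⟩
  · have hs := T.2.2.1
    rw [s7_shape_sum] at hs
    have hkey := (s7_key D hb2 l (n - 3*l - 3) (by omega) T.1 T.2).1
    have he : n - 3*l - 3 + 1 = n - 3*l - 2 := by omega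
    rwa [he] at hkey
  · intro T1 T2 hT
    have hs := T1.2.2.1
    rw [s7_shape_sum] at hs
    apply Subtype.ext
    exact s7_inj D hb2 l (n - 3*l - 3) (by omega) T1.1 T2.1 T1.2 T2.2
      (congrArg Subtype.val hT)
  · intro T
    have hs := T.2.2.1
    rw [s7_shape_sum] at hs
    have hkey := (s7_key D hb2 l (n - 3*l - 3) (by omega) T.1 T.2).2
    have he : n - 3*l - 3 + 1 = n - 3*l - 2 := by omega
    rw [he] at hkey
    exact hkey
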